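/- arXiv:1001.2913 — 4 statements merged into one kernel-verified Lean document; each statement's English description precedes it below -/
import Mathlib

section
/- Let a, b, c, d be four points such that segments ab and cd properly cross. Then the shortest side of the quadrilateral acbd (i.e., the minimum of |ac|, |cb|, |bd|, |da|) is at most 1/√2 times the longer diagonal, i.e., min{|ac|, |cb|, |bd|, |da|} ≤ max{|ab|, |cd|}/√2. -/
open Real

lemma key_cross (x y x2 y2 E F w M : ℝ) (hx : 0 ≤ x) (hy : 0 ≤ y) (hx2 : 0 ≤ x2) (hy2 : 0 ≤ y2)
    (hs : x + y = 1) (hs2 : x2 + y2 = 1) (hME : E ≤ M) (hMF : F ≤ M)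
    (hA : M/2 < y^2*E + y2^2*F - 2*y*y2*w)
    (hB : M/2 < x^2*E + y2^2*F + 2*x*y2*w)
    (hC : M/2 < x^2*E + x2^2*F - 2*x*x2*w)
    (hD : M/2 < y^2*E + x2^2*F + 2*y*x2*w) : False := by
  have hy' : y = 1 - x := by linarith
  have hy2' : y2 = 1 - x2 := by linarith
  subst hy' hy2'
  have h1 : 0 ≤ x * ((1-x)^2*E + (1-x2)^2*F - 2*(1-x)*(1-x2)*w - M/2) := mul_nonneg hx (by linarith)
  have h2 : 0 ≤ (1-x) * (x^2*E + (1-x2)^2*F + 2*x*(1-x2)*w - M/2) := mul_nonneg hy (by linarith)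
  have h3 : 0 ≤ x2 * (x^2*E + (1-x2)^2*F + 2*x*(1-x2)*w - M/2) := mul_nonneg hx2 (by linarith)
  have h4 : 0 ≤ (1-x2) * (x^2*E + x2^2*F - 2*x*x2*w - M/2) := mul_nonneg hy2 (by linarith)
  have h5 : 0 ≤ (1-x) * (x^2*E + x2^2*F - 2*x*x2*w - M/2) := mul_nonneg hy (by linarith)
  have h6 : 0 ≤ x * ((1-x)^2*E + x2^2*F + 2*(1-x)*x2*w - M/2) := mul_nonneg hx (by linarith)
  have h7 : 0 ≤ (1-x2) * ((1-x)^2*E + x2^2*F + 2*(1-x)*x2*w - M/2) := mul_nonneg hy2 (by linarith)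
  have h8 : 0 ≤ x2 * ((1-x)^2*E + (1-x2)^2*F - 2*(1-x)*(1-x2)*w - M/2) := mul_nonneg hx2 (by linarith)
  rcases lt_or_ge 0 x with hx0 | hx0
  · have h1' : 0 < x * ((1-x)^2*E + (1-x2)^2*F - 2*(1-x)*(1-x2)*w - M/2) := mul_pos hx0 (by linarith)
    linarith [h1', h2, h3, h4, h5, h6, h7, h8, hME, hMF]
  · have hxe : x = 0 := le_antisymm hx0 hx
    subst hxe
    linarith [h1, h2, h3, h4, h5, h6, h7, h8, hME, hMF]

/-- If segments `ab` and `cd` properly cross, then the shortest side of the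
quadrilateral `acbd` is at most `1/√2` times the longer diagonal. -/
theorem shortest_side_le_diag_div_sqrt_two
    (a b c d : EuclideanSpace ℝ (Fin 2))
    (hcross : ∃ j, j ∈ openSegment ℝ a b ∧ j ∈ openSegment ℝ c d) :
    min (min (dist a c) (dist c b)) (min (dist b d) (dist d a)) ≤
      max (dist a b) (dist c d) / Real.sqrt 2 := by
  by_contra hcon
  push_neg at hcon
  set D := max (dist a b) (dist c d) with hD
  have hD0 : 0 ≤ D := le_max_of_le_left dist_nonneg
  have hs2 : (0:ℝ) < Real.sqrt 2 := Real.sqrt_pos.mpr (by norm_num)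
  have hQ0 : 0 ≤ D / Real.sqrt 2 := div_nonneg hD0 hs2.le
  have hQsq : (D / Real.sqrt 2)^2 = D^2 / 2 := by
    rw [div_pow, Real.sq_sqrt (by norm_num : (0:ℝ) ≤ 2)]
  -- each side is strictly bigger than D/√2
  have hac' : D / Real.sqrt 2 < dist a c :=
    lt_of_lt_of_le hcon ((min_le_left _ _).trans (min_le_left _ _))
  have hcb' : D / Real.sqrt 2 < dist c b :=
    lt_of_lt_of_le hcon ((min_le_left _ _).trans (min_le_right _ _))
  have hbd' : D / Real.sqrt 2 < dist b d :=
    lt_of_lt_of_le hcon ((min_le_right _ _).trans (min_le_left _ _))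
  have hda' : D / Real.sqrt 2 < dist d a :=
    lt_of_lt_of_le hcon ((min_le_right _ _).trans (min_le_right _ _))
  have sqlt : ∀ u : ℝ, D / Real.sqrt 2 < u → D^2/2 < u^2 := by
    intro u hu
    have := pow_lt_pow_left₀ hu hQ0 (n := 2) (by norm_num)
    rwa [hQsq] at this
  obtain ⟨j, hj1, hj2⟩ := hcross
  rw [openSegment, Set.mem_setOf_eq] at hj1 hj2
  obtain ⟨x, y, hx, hy, hxy, hj⟩ := hj1
  obtain ⟨x2, y2, hx2, hy2, hxy2, hj'⟩ := hj2
  have hxe : x = 1 - y := by linarith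
  have hx2e : x2 = 1 - y2 := by linarith
  subst hxe hx2e
  have h := hj.trans hj'.symm
  set e := a - b with he
  set f := c - d with hf
  set E := ‖e‖^2 with hE
  set F := ‖f‖^2 with hF
  set w : ℝ := inner ℝ e f with hw
  have expand : ∀ s t : ℝ, ‖s • e + t • f‖^2 = s^2*E + t^2*F + 2*(s*t)*w := by
    intro s t
    rw [norm_add_sq_real, real_inner_smul_left, real_inner_smul_right, norm_smul, norm_smul]
    simp only [mul_pow, sq_abs, Real.norm_eq_abs]
    rw [hE, hF, hw]; ring
  have hac : a - c = y • e + (-y2) • f := by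
    rw [he, hf]; linear_combination (norm := module) h
  have hcb : c - b = (1-y) • e + y2 • f := by
    rw [he, hf]; linear_combination (norm := module) -h
  have hbd : b - d = (-(1-y)) • e + (1-y2) • f := by
    rw [he, hf]; linear_combination (norm := module) h
  have hda : d - a = (-y) • e + (-(1-y2)) • f := by
    rw [he, hf]; linear_combination (norm := module) -h
  have dac : (dist a c)^2 = y^2*E + y2^2*F - 2*y*y2*w := by
    rw [dist_eq_norm, hac, expand]; ring
  have dcb : (dist c b)^2 = (1-y)^2*E + y2^2*F + 2*(1-y)*y2*w := by
    rw [dist_eq_norm, hcb, expand]; ring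
  have dbd : (dist b d)^2 = (1-y)^2*E + (1-y2)^2*F - 2*(1-y)*(1-y2)*w := by
    rw [dist_eq_norm, hbd, expand]; ring
  have dda : (dist d a)^2 = y^2*E + (1-y2)^2*F + 2*y*(1-y2)*w := by
    rw [dist_eq_norm, hda, expand]; ring
  have hME : E ≤ D^2 := by
    rw [hE, ← dist_eq_norm]
    exact pow_le_pow_left₀ dist_nonneg (le_max_left _ _) 2
  have hMF : F ≤ D^2 := by
    rw [hF, ← dist_eq_norm]
    exact pow_le_pow_left₀ dist_nonneg (le_max_right _ _) 2
  exact key_cross (1-y) y (1-y2) y2 E F w (D^2) (by linarith) hy.le (by linarith) hy2.le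
    (by ring) (by ring) hME hMF
    (by have := sqlt _ hac'; rw [dac] at this; linarith)
    (by have := sqlt _ hcb'; rw [dcb] at this; linarith)
    (by have := sqlt _ hbd'; rw [dbd] at this; linarith)
    (by have := sqlt _ hda'; rw [dda] at this; linarith)
end

section
/- Let θ be a real number with 0 < θ < π/3 and let t = (1 + √(2 − 2cos θ))/(2cos θ − 1). Let a, b, c be three distinct points in the plane with |ac| ≤ |ab| and with angle ∠bac = α satisfying 0 ≤ α ≤ θ. Then |bc| ≤ |ab| − |ac|/t. -/
open EuclideanGeometry Real

/-- Lemma for Yao graphs `Y_k`, `k ≥ 7`: if `0 < θ < π/3`,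
`t = (1 + √(2 − 2cos θ))/(2cos θ − 1)`, `|ac| ≤ |ab|` and the angle
`∠bac ≤ θ`, then `|bc| ≤ |ab| − |ac|/t`. -/
theorem yao_shrinking_lemma
    (θ t : ℝ) (hθ0 : 0 < θ) (hθ1 : θ < π / 3)
    (ht : t = (1 + Real.sqrt (2 - 2 * Real.cos θ)) / (2 * Real.cos θ - 1))
    (a b c : EuclideanSpace ℝ (Fin 2))
    (hab : a ≠ b) (hac : a ≠ c) (hbc : b ≠ c)
    (hle : dist a c ≤ dist a b)
    (hα : ∠ b a c ≤ θ) :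
    dist b c ≤ dist a b - dist a c / t := by
  have hθπ : θ < π := lt_trans hθ1 (by linarith [Real.pi_pos])
  have hcos : Real.cos θ > 1 / 2 := by
    have h := Real.cos_lt_cos_of_nonneg_of_le_pi (le_of_lt hθ0)
      (by linarith [Real.pi_pos] : π / 3 ≤ π) hθ1
    rwa [Real.cos_pi_div_three] at h
  have hcos1 : Real.cos θ < 1 := by
    have h := Real.cos_lt_cos_of_nonneg_of_le_pi (le_refl (0:ℝ)) (le_of_lt hθπ) hθ0
    rwa [Real.cos_zero] at h
  have hc0 : (0:ℝ) < 2 * Real.cos θ - 1 := by linarith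
  have hs0 : 0 ≤ Real.sqrt (2 - 2 * Real.cos θ) := Real.sqrt_nonneg _
  have hs2 : Real.sqrt (2 - 2 * Real.cos θ) ^ 2 = 2 - 2 * Real.cos θ :=
    Real.sq_sqrt (by linarith)
  set s := Real.sqrt (2 - 2 * Real.cos θ) with hs
  have ht1 : 1 < t := by
    rw [ht, lt_div_iff₀ hc0]
    nlinarith
  have ht0 : 0 < t := lt_trans one_pos ht1
  have ht2 : (0:ℝ) < t ^ 2 := by positivity
  -- key identity: (2cosθ−1) t² − 2t + 1 = 0
  have hkey : (2 * Real.cos θ - 1) * t ^ 2 - 2 * t + 1 = 0 := by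
    rw [ht]
    field_simp
    nlinarith [hs2]
  have hexp : 2 * Real.cos θ * t ^ 2 = t ^ 2 + 2 * t - 1 := by nlinarith [hkey]
  have hr : 0 < dist a c := dist_pos.mpr hac
  have hR : 0 < dist a b := dist_pos.mpr hab
  have hlaw : dist b c ^ 2 = dist a b ^ 2 + dist a c ^ 2
      - 2 * dist a b * dist a c * Real.cos (∠ b a c) := by
    have h := EuclideanGeometry.law_cos b a c
    rw [dist_comm b a, dist_comm c a] at h
    linear_combination h
  have hα0 : 0 ≤ ∠ b a c := EuclideanGeometry.angle_nonneg b a c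
  have hcosα : Real.cos θ ≤ Real.cos (∠ b a c) :=
    Real.cos_le_cos_of_nonneg_of_le_pi hα0 (le_of_lt hθπ) hα
  set r := dist a c
  set R := dist a b
  have hX : 0 ≤ R - r / t := by
    have : r / t ≤ r := by
      rw [div_le_iff₀ ht0]; nlinarith
    linarith
  have h3 : 0 ≤ (R - r) * r * (t ^ 2 - 1) := by
    apply mul_nonneg (mul_nonneg (by linarith) hr.le) (by nlinarith)
  have h2' : (R ^ 2 + r ^ 2 - 2 * R * r * Real.cos θ) * t ^ 2 ≤ (R * t - r) ^ 2 := by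
    nlinarith [hexp, h3]
  have h2 : R ^ 2 + r ^ 2 - 2 * R * r * Real.cos θ ≤ (R - r / t) ^ 2 := by
    have heq : (R - r / t) ^ 2 = (R * t - r) ^ 2 / t ^ 2 := by
      field_simp
    rw [heq, le_div_iff₀ ht2]
    exact h2'
  have hsq : dist b c ^ 2 ≤ (R - r / t) ^ 2 := by
    rw [hlaw]
    have hRr : (0:ℝ) ≤ 2 * R * r := by positivity
    have h1 := mul_le_mul_of_nonneg_left hcosα hRr
    linarith
  exact le_of_pow_le_pow_left₀ two_ne_zero hX hsq
end

section
/- Let a, b, c, d be four points such that segments ab and cd properly cross at point j, and suppose d lies in the same (open) quadrant of a as b with |ab| ≤ |ad|, and b lies in the same quadrant of c as d with |cd| ≤ |cb|. Then a contradiction follows; equivalently, it is impossible that both |ab| ≤ |ad| and |cd| ≤ |cb| hold when the segments cross with these quadrant conditions. -/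
/-- If segments `ab` and `cd` properly cross, with `b, d` in the open first
quadrant of `a` and `b, d` in the open first quadrant of `c`, then it is
impossible that both `|ab| ≤ |ad|` and `|cd| ≤ |cb|`. -/
theorem crossing_same_quadrant_impossible
    (a b c d : EuclideanSpace ℝ (Fin 2))
    (hdist : a ≠ b ∧ a ≠ c ∧ a ≠ d ∧ b ≠ c ∧ b ≠ d ∧ c ≠ d)
    (hba : a 0 < b 0 ∧ a 1 < b 1)
    (hdc : c 0 < d 0 ∧ c 1 < d 1)
    (hda : a 0 < d 0 ∧ a 1 < d 1)
    (hbc : c 0 < b 0 ∧ c 1 < b 1)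
    (hcross : ∃ j, j ∈ openSegment ℝ a b ∧ j ∈ openSegment ℝ c d) :
    ¬ (dist a b ≤ dist a d ∧ dist c d ≤ dist c b) := by
  rintro ⟨h1, h2⟩
  obtain ⟨j, hj1, hj2⟩ := hcross
  have hwab : Wbtw ℝ a j b :=
    mem_segment_iff_wbtw.1 (openSegment_subset_segment ℝ a b hj1)
  have hwcd : Wbtw ℝ c j d :=
    mem_segment_iff_wbtw.1 (openSegment_subset_segment ℝ c d hj2)
  have e1 : dist a j + dist j b = dist a b := hwab.dist_add_dist
  have e2 : dist c j + dist j d = dist c d := hwcd.dist_add_dist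
  have t1 : dist a d ≤ dist a j + dist j d := dist_triangle a j d
  have t2 : dist c b ≤ dist c j + dist j b := dist_triangle c j b
  have hAD : dist a b = dist a d := by linarith
  have hE : dist a j + dist j d = dist a d := by linarith
  have hwad : Wbtw ℝ a j d := dist_add_dist_eq_iff.1 hE
  -- extract scalar parameters
  rw [openSegment_eq_image'] at hj1
  obtain ⟨v, ⟨hv0, hv1⟩, hjv⟩ := hj1
  have hmem : j ∈ segment ℝ a d := hwad.mem_segment
  rw [segment_eq_image'] at hmem
  obtain ⟨t, ⟨ht0, ht1⟩, hjt⟩ := hmem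
  have hab : b ≠ a := fun h => hdist.1 h.symm
  have hba' : b - a ≠ 0 := sub_ne_zero.2 hab
  have hkey : v • (b - a) = t • (d - a) := by
    have : a + v • (b - a) = a + t • (d - a) := hjv.trans hjt.symm
    exact add_left_cancel this
  have hn1 : ‖b - a‖ = ‖d - a‖ := by
    rw [← dist_eq_norm, ← dist_eq_norm, dist_comm b a, dist_comm d a]
    exact hAD
  have hnorm : v * ‖b - a‖ = t * ‖b - a‖ := by
    have := congrArg norm hkey
    rwa [norm_smul, norm_smul, Real.norm_of_nonneg hv0.le,
      Real.norm_of_nonneg ht0, ← hn1] at this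
  have hvt : v = t := by
    have hnne : ‖b - a‖ ≠ 0 := norm_ne_zero_iff.2 hba'
    exact mul_right_cancel₀ hnne hnorm
  have hbd : b - a = d - a := by
    have : v • (b - a) = v • (d - a) := by rw [hkey, hvt]
    exact smul_right_injective _ (ne_of_gt hv0) this
  exact hdist.2.2.2.2.1 (by
    have := sub_left_injective.eq_iff.1 hbd
    exact this)
end

section
/- If segments ab ∈ Y₄ and cd ∈ Y₄ cross, b in Q₁(a), c ∈ Q₁(a), d ∈ Q₂(c), |ab| ≤ |ac| and |cd| ≤ |cb|, then neither ac nor cb is a (strictly) shortest side of the quadrilateral acbd; that is, min{|ad|, |db|} ≤ min{|ac|, |cb|}. -/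
/-- If Yao edges `ab` and `cd` properly cross, with `b, c` in the open first
quadrant of `a`, `d` in the open second quadrant of `c`, `|ab| ≤ |ac|` and
`|cd| ≤ |cb|`, then a shortest side of the quadrilateral `acbd` is among
`ad` and `db`: `min{|ad|, |db|} ≤ min{|ac|, |cb|}`. -/
theorem shortest_side_among_ad_db
    (a b c d : EuclideanSpace ℝ (Fin 2))
    (hdist : a ≠ b ∧ a ≠ c ∧ a ≠ d ∧ b ≠ c ∧ b ≠ d ∧ c ≠ d)
    (hba : a 0 < b 0 ∧ a 1 < b 1)
    (hca : a 0 < c 0 ∧ a 1 < c 1)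
    (hdc : d 0 < c 0 ∧ c 1 < d 1)
    (hcross : ∃ j, j ∈ openSegment ℝ a b ∧ j ∈ openSegment ℝ c d)
    (h1 : dist a b ≤ dist a c)
    (h2 : dist c d ≤ dist c b) :
    min (dist a d) (dist d b) ≤ min (dist a c) (dist c b) := by
  obtain ⟨j, hj1, hj2⟩ := hcross
  have e1 : dist a j + dist j b = dist a b :=
    dist_add_dist_of_mem_segment (openSegment_subset_segment ℝ a b hj1)
  have e2 : dist c j + dist j d = dist c d :=
    dist_add_dist_of_mem_segment (openSegment_subset_segment ℝ c d hj2)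
  have tad : dist a d ≤ dist a j + dist j d := dist_triangle a j d
  have tcb : dist c b ≤ dist c j + dist j b := dist_triangle c j b
  have tdb : dist d b ≤ dist d j + dist j b := dist_triangle d j b
  have tac : dist a c ≤ dist a j + dist j c := dist_triangle a j c
  have had : dist a d ≤ dist a c := by
    have := dist_comm c j
    nlinarith [dist_comm c j]
  have hdb : dist d b ≤ dist c b := by
    nlinarith [dist_comm d j, dist_comm j c]
  exact le_min (le_trans (min_le_left _ _) had) (le_trans (min_le_right _ _) hdb)
end
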